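/- Let F : ℝ → ℝ be the Gumbel max cumulative distribution function, F(t) = exp(−exp(−t)). Then both t ↦ log F(t) and t ↦ log(1 − F(t)) are strictly concave on ℝ. -/

import Mathlib

open Real

lemma gumbel_aux_F_lt_one (t : ℝ) : Real.exp (-Real.exp (-t)) < 1 :=
  Real.exp_lt_one_iff.mpr (neg_neg_iff_pos.mpr (Real.exp_pos _))

lemma gumbel_aux_g_deriv (t : ℝ) :
    HasDerivAt (fun t : ℝ => Real.log (1 - Real.exp (-Real.exp (-t))))
      (-Real.exp (-t) / (Real.exp (Real.exp (-t)) - 1)) t := by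
  have hu : HasDerivAt (fun t : ℝ => Real.exp (-t)) (-Real.exp (-t)) t := by
    have := ((hasDerivAt_id t).neg).exp
    simpa using this
  have hF : HasDerivAt (fun t : ℝ => Real.exp (-Real.exp (-t)))
      (Real.exp (-Real.exp (-t)) * Real.exp (-t)) t := by
    have : HasDerivAt (fun t : ℝ => Real.exp (-Real.exp (-t)))
        (Real.exp (-Real.exp (-t)) * - -Real.exp (-t)) t := hu.neg.exp
    convert this using 1
    ring
  have h1F : HasDerivAt (fun t : ℝ => 1 - Real.exp (-Real.exp (-t)))
      (-(Real.exp (-Real.exp (-t)) * Real.exp (-t))) t := by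
    have : HasDerivAt (fun t : ℝ => 1 - Real.exp (-Real.exp (-t)))
        (0 - Real.exp (-Real.exp (-t)) * Real.exp (-t)) t := (hasDerivAt_const t (1:ℝ)).sub hF
    simpa using this
  have hne : 1 - Real.exp (-Real.exp (-t)) ≠ 0 := by
    have := gumbel_aux_F_lt_one t; linarith
  have := h1F.log hne
  convert this using 1
  have hE : Real.exp (Real.exp (-t)) * Real.exp (-Real.exp (-t)) = 1 := by
    rw [← Real.exp_add]; simp
  have hEpos : (0:ℝ) < Real.exp (Real.exp (-t)) := Real.exp_pos _
  have hE1 : Real.exp (Real.exp (-t)) - 1 ≠ 0 := by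
    have h1 : 1 < Real.exp (Real.exp (-t)) := by
      simpa using Real.exp_lt_exp.mpr (Real.exp_pos (-t))
    linarith
  rw [div_eq_div_iff hE1 hne]
  linear_combination Real.exp (-t) * hE

lemma gumbel_aux_key (u : ℝ) (hu : 0 < u) : Real.exp u - 1 < u * Real.exp u := by
  have h := Real.add_one_lt_exp (x := -u) (by linarith)
  have hE : (0:ℝ) < Real.exp u := Real.exp_pos u
  have hinv : Real.exp (-u) = (Real.exp u)⁻¹ := Real.exp_neg u
  rw [hinv] at h
  have := mul_lt_mul_of_pos_right h hE
  rw [inv_mul_cancel₀ hE.ne'] at this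
  nlinarith

theorem gumbel_max_log_cdf_strictly_concave :
    StrictConcaveOn ℝ Set.univ
      (fun t : ℝ => Real.log (Real.exp (-Real.exp (-t)))) ∧
    StrictConcaveOn ℝ Set.univ
      (fun t : ℝ => Real.log (1 - Real.exp (-Real.exp (-t)))) := by
  constructor
  · simp only [Real.log_exp]
    apply strictConcaveOn_univ_of_deriv2_neg
    · exact (Real.continuous_exp.comp continuous_neg).neg
    · intro x
      have hu : ∀ t : ℝ, HasDerivAt (fun t : ℝ => -Real.exp (-t)) (Real.exp (-t)) t := by
        intro t
        have : HasDerivAt (fun t : ℝ => -Real.exp (-t)) _ t := (((hasDerivAt_id t).neg).exp).neg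
        simpa using this
      have hd : deriv (fun t : ℝ => -Real.exp (-t)) = fun t : ℝ => Real.exp (-t) :=
        funext fun t => (hu t).deriv
      simp only [Function.iterate_succ, Function.iterate_zero, Function.comp_apply, id_eq, hd]
      have h2 : HasDerivAt (fun t : ℝ => Real.exp (-t)) (-Real.exp (-x)) x := by
        have := ((hasDerivAt_id x).neg).exp
        simpa using this
      rw [h2.deriv]
      simpa using Real.exp_pos (-x)
  · apply strictConcaveOn_univ_of_deriv2_neg
    · apply Continuous.log
      · fun_prop
      · intro x
        have := gumbel_aux_F_lt_one x
        linarith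
    · intro x
      have hd : deriv (fun t : ℝ => Real.log (1 - Real.exp (-Real.exp (-t))))
          = fun t : ℝ => -Real.exp (-t) / (Real.exp (Real.exp (-t)) - 1) :=
        funext fun t => (gumbel_aux_g_deriv t).deriv
      simp only [Function.iterate_succ, Function.iterate_zero, Function.comp_apply, id_eq, hd]
      set u := Real.exp (-x) with hu_def
      set E := Real.exp u with hE_def
      have hupos : 0 < u := Real.exp_pos _
      have hE1 : 1 < E := by simpa [hE_def] using Real.exp_lt_exp.mpr hupos
      have hN : HasDerivAt (fun t : ℝ => -Real.exp (-t)) u x := by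
        have : HasDerivAt (fun t : ℝ => -Real.exp (-t)) _ x := (((hasDerivAt_id x).neg).exp).neg
        simpa using this
      have hux : HasDerivAt (fun t : ℝ => Real.exp (-t)) (-u) x := by
        have := ((hasDerivAt_id x).neg).exp
        simpa using this
      have hD : HasDerivAt (fun t : ℝ => Real.exp (Real.exp (-t)) - 1) (E * -u) x := by
        simpa using (hux.exp).sub_const 1
      have hD0 : E - 1 ≠ 0 := by linarith
      have hdiv : HasDerivAt (fun t : ℝ => -Real.exp (-t) / (Real.exp (Real.exp (-t)) - 1)) _ x :=
        hN.div hD hD0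
      rw [hdiv.deriv]
      apply div_neg_of_neg_of_pos
      · have hkey := gumbel_aux_key u hupos
        nlinarith
      · positivity
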